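/- arXiv:1206.0154 — 5 statements merged into one kernel-verified Lean document; each statement's English description precedes it below -/
import Mathlib

section
/- There exists n₀ ∈ ℕ such that for every n ≥ n₀ and every real Δ with 20·ln n ≤ Δ ≤ n^{0.1}, setting η = ⌊n^{0.12}⌋, m = η⁸, and q = Δ/(2η), the following holds: for every natural number L < (Δ·ln n)/100 and every transmission schedule σ : Fin L → Finset (Fin η), the probability under μ that σ covers the random network is at most exp(−η⁶) = exp(−n^{0.72}). -/
open MeasureTheory

/-- The Bernoulli(q) measure on `Bool`: `true` has mass `q`, `false` has mass `1 - q`. -/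
noncomputable def bernoulliMeasure (q : ℝ) : Measure Bool :=
  ENNReal.ofReal q • Measure.dirac true + ENNReal.ofReal (1 - q) • Measure.dirac false

/-- The random bipartite graph measure: each potential edge `(u, s)` with
`u : Fin m` a receiver and `s : Fin η` a sender is present independently with
probability `q`. -/
noncomputable def randomGraphMeasure (m η : ℕ) (q : ℝ) :
    Measure (Fin m → Fin η → Bool) :=
  Measure.pi fun _ : Fin m => Measure.pi fun _ : Fin η => bernoulliMeasure q

/-- The neighborhood of receiver `u` in the adjacency function `A`. -/
def nbhd {m η : ℕ} (A : Fin m → Fin η → Bool) (u : Fin m) : Finset (Fin η) :=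
  Finset.univ.filter fun s => A u s = true

/-- A transmission schedule `σ` covers the network given by `A` if every
receiver `u` receives the message of each of its neighbors `v` in some round. -/
def Covers {m η L : ℕ} (σ : Fin L → Finset (Fin η)) (A : Fin m → Fin η → Bool) : Prop :=
  ∀ (u : Fin m) (v : Fin η), v ∈ nbhd A u → ∃ t : Fin L, σ t ∩ nbhd A u = {v}

open Finset
open scoped NNReal ENNReal

namespace RadioAux

/-- helper: bool order -/
lemma bool_le_true {b b' : Bool} (h : b ≤ b') (hb : b = true) : b' = true := by
  subst hb; cases b'
  · exact absurd h (by decide)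
  · rfl

/-- product weight -/
noncomputable def W (x y : ℝ≥0) {n : ℕ} (B : Fin n → Bool) : ℝ≥0 :=
  ∏ i, (if B i then x else y)

lemma sum_prod_bool {n : ℕ} (h : Fin n → Bool → ℝ≥0) :
    ∑ B : Fin n → Bool, ∏ i, h i (B i) = ∏ i, (h i false + h i true) := by
  classical
  calc ∑ B : Fin n → Bool, ∏ i, h i (B i)
      = ∑ B ∈ Fintype.piFinset (fun _ : Fin n => (univ : Finset Bool)), ∏ i, h i (B i) := by
        rw [Fintype.piFinset_univ]
    _ = ∏ i, ∑ b : Bool, h i b := (Finset.prod_univ_sum _ _).symm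
    _ = ∏ i, (h i false + h i true) := by
        refine Finset.prod_congr rfl fun i _ => ?_
        rw [Fintype.sum_bool, add_comm]

lemma sum_succ {n : ℕ} (F : (Fin (n + 1) → Bool) → ℝ≥0) :
    ∑ B : Fin (n + 1) → Bool, F B
      = ∑ B : Fin n → Bool, (F (Fin.cons false B) + F (Fin.cons true B)) := by
  classical
  rw [← (Fin.consEquiv (fun _ : Fin (n+1) => Bool)).sum_comp F, Fintype.sum_prod_type]
  rw [Fintype.sum_bool]
  rw [← Finset.sum_add_distrib]
  refine Finset.sum_congr rfl fun B _ => ?_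
  simp [Fin.consEquiv, add_comm]

lemma W_cons {x y : ℝ≥0} {n : ℕ} (b : Bool) (B : Fin n → Bool) :
    W x y (Fin.cons b B) = (if b then x else y) * W x y B := by
  unfold W
  rw [Fin.prod_univ_succ]
  simp

lemma cons_le_cons {n : ℕ} {b b' : Bool} (hb : b ≤ b') {B B' : Fin n → Bool} (h : B ≤ B') :
    (Fin.cons b B : Fin (n+1) → Bool) ≤ Fin.cons b' B' := by
  intro i
  induction i using Fin.cases with
  | zero => simpa using hb
  | succ j => simpa using h j
lemma harris_step {x y F0 F1 G0 G1 : ℝ≥0} (hxy : x + y = 1)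
    (hF : F0 ≤ F1) (hG : G0 ≤ G1) :
    (y * F0 + x * F1) * (y * G0 + x * G1) ≤ y * (F0 * G0) + x * (F1 * G1) := by
  obtain ⟨s, hs⟩ := exists_add_of_le hF
  obtain ⟨t, ht⟩ := exists_add_of_le hG
  subst hs ht
  have hyx : y + x = 1 := by rw [add_comm]; exact hxy
  have hx1 : x ≤ 1 := hxy ▸ le_self_add
  have e1 : y * F0 + x * (F0 + s) = F0 + x * s := by
    rw [mul_add, ← add_assoc, ← add_mul, hyx, one_mul]
  have e2 : y * G0 + x * (G0 + t) = G0 + x * t := by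
    rw [mul_add, ← add_assoc, ← add_mul, hyx, one_mul]
  rw [e1, e2]
  have e3 : y * (F0 * G0) + x * ((F0 + s) * (G0 + t))
      = (y + x) * (F0 * G0) + (x * (F0 * t) + x * (s * G0) + x * (s * t)) := by ring
  rw [e3, hyx, one_mul]
  have e4 : (F0 + x * s) * (G0 + x * t)
      = F0 * G0 + (x * (F0 * t) + x * (s * G0) + (x * x) * (s * t)) := by ring
  rw [e4]
  have e5 : x * x * (s * t) ≤ x * (s * t) := by
    calc x * x * (s * t) ≤ 1 * x * (s * t) := by
          exact mul_le_mul_of_nonneg_right (mul_le_mul_of_nonneg_right hx1 zero_le) zero_le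
      _ = x * (s * t) := by rw [one_mul]
  exact add_le_add_right (add_le_add_right e5 _) _

lemma harris {x y : ℝ≥0} (hxy : x + y = 1) :
    ∀ (n : ℕ) (f g : (Fin n → Bool) → ℝ≥0), Monotone f → Monotone g →
      (∑ B : Fin n → Bool, W x y B * f B) * (∑ B : Fin n → Bool, W x y B * g B)
        ≤ ∑ B : Fin n → Bool, W x y B * (f B * g B) := by
  intro n
  induction n with
  | zero =>
    intro f g _ _
    rw [Fintype.sum_unique, Fintype.sum_unique, Fintype.sum_unique]
    have hW : ∀ B : Fin 0 → Bool, W x y B = 1 := by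
      intro B; unfold W; exact Finset.prod_of_isEmpty _
    simp [hW]
  | succ n ih =>
    intro f g hf hg
    have hmono0 : ∀ b : Bool, Monotone (fun B : Fin n → Bool => f (Fin.cons b B)) :=
      fun b _ _ h => hf (cons_le_cons le_rfl h)
    have hmono0g : ∀ b : Bool, Monotone (fun B : Fin n → Bool => g (Fin.cons b B)) :=
      fun b _ _ h => hg (cons_le_cons le_rfl h)
    have hsum : ∀ (F : (Fin (n+1) → Bool) → ℝ≥0),
        ∑ B : Fin (n+1) → Bool, W x y B * F B
          = y * (∑ B : Fin n → Bool, W x y B * F (Fin.cons false B))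
            + x * (∑ B : Fin n → Bool, W x y B * F (Fin.cons true B)) := by
      intro F
      rw [sum_succ (fun B => W x y B * F B)]
      rw [Finset.sum_add_distrib, Finset.mul_sum, Finset.mul_sum]
      congr 1
      · refine Finset.sum_congr rfl fun B _ => ?_
        rw [W_cons]; simp [mul_assoc]
      · refine Finset.sum_congr rfl fun B _ => ?_
        rw [W_cons]; simp [mul_assoc]
    rw [hsum f, hsum g, hsum (fun B => f B * g B)]
    have hF01 : (∑ B : Fin n → Bool, W x y B * f (Fin.cons false B))
        ≤ ∑ B : Fin n → Bool, W x y B * f (Fin.cons true B) :=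
      Finset.sum_le_sum fun B _ => mul_le_mul_of_nonneg_left
        (hf (cons_le_cons (by decide) le_rfl)) zero_le
    have hG01 : (∑ B : Fin n → Bool, W x y B * g (Fin.cons false B))
        ≤ ∑ B : Fin n → Bool, W x y B * g (Fin.cons true B) :=
      Finset.sum_le_sum fun B _ => mul_le_mul_of_nonneg_left
        (hg (cons_le_cons (by decide) le_rfl)) zero_le
    calc (y * (∑ B : Fin n → Bool, W x y B * f (Fin.cons false B))
            + x * (∑ B : Fin n → Bool, W x y B * f (Fin.cons true B)))
          * (y * (∑ B : Fin n → Bool, W x y B * g (Fin.cons false B))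
            + x * (∑ B : Fin n → Bool, W x y B * g (Fin.cons true B)))
        ≤ y * ((∑ B : Fin n → Bool, W x y B * f (Fin.cons false B))
                * (∑ B : Fin n → Bool, W x y B * g (Fin.cons false B)))
          + x * ((∑ B : Fin n → Bool, W x y B * f (Fin.cons true B))
                * (∑ B : Fin n → Bool, W x y B * g (Fin.cons true B))) :=
          harris_step hxy hF01 hG01
      _ ≤ y * (∑ B : Fin n → Bool, W x y B * (f (Fin.cons false B) * g (Fin.cons false B)))
          + x * (∑ B : Fin n → Bool, W x y B * (f (Fin.cons true B) * g (Fin.cons true B))) := by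
          refine add_le_add ?_ ?_
          · exact mul_le_mul_of_nonneg_left (ih _ _ (hmono0 false) (hmono0g false)) zero_le
          · exact mul_le_mul_of_nonneg_left (ih _ _ (hmono0 true) (hmono0g true)) zero_le

lemma W_total {x y : ℝ≥0} (hxy : x + y = 1) (n : ℕ) :
    ∑ B : Fin n → Bool, W x y B = 1 := by
  unfold W
  rw [sum_prod_bool (fun _ b => if b then x else y)]
  have hyx : y + x = 1 := by rw [add_comm]; exact hxy
  simp [hyx]

lemma monotone_finset_prod {n : ℕ} {κ : Type*} (s : Finset κ) (f : κ → (Fin n → Bool) → ℝ≥0)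
    (hmono : ∀ j ∈ s, Monotone (f j)) :
    Monotone (fun B => ∏ j ∈ s, f j B) := by
  intro B B' h
  exact Finset.prod_le_prod' fun j hj => hmono j hj h

lemma harris_prod {x y : ℝ≥0} (hxy : x + y = 1) {n : ℕ} {κ : Type*} (s : Finset κ)
    (f : κ → (Fin n → Bool) → ℝ≥0) (hmono : ∀ j ∈ s, Monotone (f j)) :
    ∏ j ∈ s, (∑ B : Fin n → Bool, W x y B * f j B)
      ≤ ∑ B : Fin n → Bool, W x y B * ∏ j ∈ s, f j B := by
  classical
  induction s using Finset.cons_induction with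
  | empty => simp [W_total hxy n]
  | cons a s ha ih =>
    rw [Finset.prod_cons]
    have h1 : ∏ j ∈ s, (∑ B : Fin n → Bool, W x y B * f j B)
        ≤ ∑ B : Fin n → Bool, W x y B * ∏ j ∈ s, f j B :=
      ih fun j hj => hmono j (Finset.mem_cons_of_mem hj)
    calc (∑ B : Fin n → Bool, W x y B * f a B) * ∏ j ∈ s, (∑ B : Fin n → Bool, W x y B * f j B)
        ≤ (∑ B : Fin n → Bool, W x y B * f a B)
            * (∑ B : Fin n → Bool, W x y B * ∏ j ∈ s, f j B) :=
          mul_le_mul_of_nonneg_left h1 zero_le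
      _ ≤ ∑ B : Fin n → Bool, W x y B * (f a B * ∏ j ∈ s, f j B) :=
          harris hxy n _ _ (hmono a (Finset.mem_cons_self a s))
            (monotone_finset_prod s f fun j hj => hmono j (Finset.mem_cons_of_mem hj))
      _ = ∑ B : Fin n → Bool, W x y B * ∏ j ∈ Finset.cons a s ha, f j B := by
          refine Finset.sum_congr rfl fun B _ => ?_
          rw [Finset.prod_cons]
section Marginals

variable {x y : ℝ≥0}

lemma E_coord (hxy : x + y = 1) {n : ℕ} (v : Fin n) :
    ∑ B : Fin n → Bool, W x y B * (if B v then 1 else 0) = x := by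
  classical
  have hyx : y + x = 1 := by rw [add_comm]; exact hxy
  set h : Fin n → Bool → ℝ≥0 :=
    fun i b => if i = v then (if b then x else 0) else (if b then x else y) with hh
  have key : ∀ B : Fin n → Bool, W x y B * (if B v then 1 else 0) = ∏ i, h i (B i) := by
    intro B
    unfold W
    rw [← Finset.mul_prod_erase Finset.univ (fun i => if B i then x else y) (Finset.mem_univ v),
        ← Finset.mul_prod_erase Finset.univ (fun i => h i (B i)) (Finset.mem_univ v)]
    have h1 : ∏ i ∈ Finset.univ.erase v, h i (B i)
        = ∏ i ∈ Finset.univ.erase v, (if B i then x else y) :=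
      Finset.prod_congr rfl fun i hi => by simp [hh, (Finset.mem_erase.mp hi).1]
    have h2 : h v (B v) = (if B v then x else y) * (if B v then 1 else 0) := by
      cases hB : B v <;> simp [hh, hB]
    rw [h1, h2]
    ring
  rw [Finset.sum_congr rfl fun B _ => key B, sum_prod_bool h,
    ← Finset.mul_prod_erase Finset.univ (fun i => h i false + h i true) (Finset.mem_univ v)]
  have h3 : ∏ i ∈ Finset.univ.erase v, (h i false + h i true) = 1 :=
    Finset.prod_eq_one fun i hi => by simp [hh, (Finset.mem_erase.mp hi).1, hyx]
  have h4 : h v false + h v true = x := by simp [hh]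
  rw [h3, h4, mul_one]

lemma avoid_eq_prod {n : ℕ} (T : Finset (Fin n)) (B : Fin n → Bool) :
    (if ∀ w ∈ T, B w = false then (1:ℝ≥0) else 0) = ∏ w ∈ T, (if B w then 0 else 1) := by
  classical
  by_cases h : ∀ w ∈ T, B w = false
  · rw [if_pos h]
    exact (Finset.prod_eq_one fun w hw => by simp [h w hw]).symm
  · rw [if_neg h]
    push_neg at h
    obtain ⟨w, hw, hBw⟩ := h
    simp only [Bool.not_eq_false] at hBw
    exact (Finset.prod_eq_zero hw (by simp [hBw])).symm

lemma E_avoid (hxy : x + y = 1) {n : ℕ} (T : Finset (Fin n)) :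
    ∑ B : Fin n → Bool, W x y B * (if ∀ w ∈ T, B w = false then 1 else 0) = y ^ T.card := by
  classical
  have hyx : y + x = 1 := by rw [add_comm]; exact hxy
  set h : Fin n → Bool → ℝ≥0 :=
    fun i b => if i ∈ T then (if b then 0 else y) else (if b then x else y) with hh
  have key : ∀ B : Fin n → Bool,
      W x y B * (if ∀ w ∈ T, B w = false then (1:ℝ≥0) else 0) = ∏ i, h i (B i) := by
    intro B
    rw [avoid_eq_prod]
    unfold W
    rw [← Finset.prod_mul_prod_compl T (fun i => if B i then x else y),
        ← Finset.prod_mul_prod_compl T (fun i => h i (B i))]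
    have e1 : ∏ i ∈ T, h i (B i)
        = ∏ i ∈ T, ((if B i then x else y) * (if B i then 0 else 1)) :=
      Finset.prod_congr rfl fun i hi => by cases hB : B i <;> simp [hh, hB, hi]
    have e2 : ∏ i ∈ Tᶜ, h i (B i) = ∏ i ∈ Tᶜ, (if B i then x else y) :=
      Finset.prod_congr rfl fun i hi => by simp [hh, Finset.mem_compl.mp hi]
    rw [e1, e2, Finset.prod_mul_distrib]
    ring
  rw [Finset.sum_congr rfl fun B _ => key B, sum_prod_bool h,
    ← Finset.prod_mul_prod_compl T (fun i => h i false + h i true)]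
  have e3 : ∏ i ∈ T, (h i false + h i true) = y ^ T.card := by
    rw [← Finset.prod_const y]
    exact Finset.prod_congr rfl fun i hi => by simp [hh, hi]
  have e4 : ∏ i ∈ Tᶜ, (h i false + h i true) = 1 :=
    Finset.prod_eq_one fun i hi => by simp [hh, Finset.mem_compl.mp hi, hyx]
  rw [e3, e4, mul_one]

lemma hit_add_avoid {n : ℕ} (T : Finset (Fin n)) (B : Fin n → Bool) :
    (if ∃ w ∈ T, B w = true then (1:ℝ≥0) else 0)
      + (if ∀ w ∈ T, B w = false then 1 else 0) = 1 := by
  classical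
  by_cases h : ∃ w ∈ T, B w = true
  · have h' : ¬ ∀ w ∈ T, B w = false := by
      obtain ⟨w, hw, hBw⟩ := h
      intro hall
      rw [hall w hw] at hBw
      exact absurd hBw (by decide)
    rw [if_pos h, if_neg h', add_zero]
  · have h' : ∀ w ∈ T, B w = false := by
      intro w hw
      cases hB : B w
      · rfl
      · exact absurd ⟨w, hw, hB⟩ h
    rw [if_neg h, if_pos h', zero_add]

lemma E_hit (hxy : x + y = 1) {n : ℕ} (T : Finset (Fin n)) :
    (∑ B : Fin n → Bool, W x y B * (if ∃ w ∈ T, B w = true then 1 else 0) : ℝ≥0)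
      + y ^ T.card = 1 := by
  classical
  calc (∑ B : Fin n → Bool, W x y B * (if ∃ w ∈ T, B w = true then 1 else 0)) + y ^ T.card
      = (∑ B : Fin n → Bool, W x y B * (if ∃ w ∈ T, B w = true then 1 else 0))
        + ∑ B : Fin n → Bool, W x y B * (if ∀ w ∈ T, B w = false then 1 else 0) := by
        rw [E_avoid hxy T]
    _ = ∑ B : Fin n → Bool, (W x y B * (if ∃ w ∈ T, B w = true then 1 else 0)
        + W x y B * (if ∀ w ∈ T, B w = false then 1 else 0)) := Finset.sum_add_distrib.symm
    _ = ∑ B : Fin n → Bool, W x y B := Finset.sum_congr rfl fun B _ => by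
        rw [← mul_add, hit_add_avoid, mul_one]
    _ = 1 := W_total hxy n

lemma monotone_coordInd {n : ℕ} (v : Fin n) :
    Monotone (fun B : Fin n → Bool => (if B v then (1:ℝ≥0) else 0)) := by
  intro B B' h
  dsimp only
  by_cases hB : B v = true
  · rw [if_pos hB, if_pos (bool_le_true (h v) hB)]
  · rw [if_neg hB]; exact zero_le

lemma monotone_hitInd {n : ℕ} (T : Finset (Fin n)) :
    Monotone (fun B : Fin n → Bool => (if ∃ w ∈ T, B w = true then (1:ℝ≥0) else 0)) := by
  classical
  intro B B' h
  dsimp only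
  by_cases hB : ∃ w ∈ T, B w = true
  · obtain ⟨w, hw, hBw⟩ := hB
    rw [if_pos (⟨w, hw, hBw⟩ : ∃ w ∈ T, B w = true),
       if_pos (⟨w, hw, bool_le_true (h w) hBw⟩ : ∃ w ∈ T, B' w = true)]
  · rw [if_neg hB]; exact zero_le

end Marginals


section Bridge

lemma xy_total {q : ℝ} (h0 : 0 ≤ q) (h1 : q ≤ 1) :
    q.toNNReal + (1 - q).toNNReal = 1 := by
  rw [← Real.toNNReal_add h0 (by linarith)]
  norm_num

lemma bern_apply (q : ℝ) (b : Bool) :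
    bernoulliMeasure q {b}
      = ((if b then q.toNNReal else (1 - q).toNNReal : ℝ≥0) : ℝ≥0∞) := by
  unfold bernoulliMeasure
  cases b <;>
    simp [MeasureTheory.Measure.dirac_apply, ENNReal.ofReal]

lemma bern_prob {q : ℝ} (h0 : 0 ≤ q) (h1 : q ≤ 1) :
    MeasureTheory.IsProbabilityMeasure (bernoulliMeasure q) := by
  constructor
  have huniv : (Set.univ : Set Bool) = {true} ∪ {false} := by
    ext b; cases b <;> simp
  rw [huniv, MeasureTheory.measure_union (by simp) (measurableSet_singleton _),
    bern_apply, bern_apply]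
  rw [if_pos rfl, if_neg (by simp)]
  rw [← ENNReal.coe_add, xy_total h0 h1, ENNReal.coe_one]

instance bern_finite (q : ℝ) : MeasureTheory.IsFiniteMeasure (bernoulliMeasure q) := by
  constructor
  unfold bernoulliMeasure
  rw [MeasureTheory.Measure.add_apply]
  refine ENNReal.add_lt_top.mpr ⟨?_, ?_⟩ <;>
  · rw [MeasureTheory.Measure.smul_apply, smul_eq_mul]
    exact ENNReal.mul_lt_top ENNReal.ofReal_lt_top (measure_lt_top _ _)

lemma pi_bern_singleton (q : ℝ) {k : ℕ} (B : Fin k → Bool) :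
    MeasureTheory.Measure.pi (fun _ : Fin k => bernoulliMeasure q) {B}
      = (W q.toNNReal (1 - q).toNNReal B : ℝ≥0∞) := by
  have h1 : ({B} : Set (Fin k → Bool)) = Set.pi Set.univ (fun i => {B i}) :=
    (Set.univ_pi_singleton B).symm
  rw [h1, MeasureTheory.Measure.pi_pi]
  unfold W
  rw [ENNReal.coe_finset_prod]
  refine Finset.prod_congr rfl fun i _ => ?_
  rw [bern_apply]

lemma pi_bern_finset (q : ℝ) {k : ℕ} (F : Finset (Fin k → Bool)) :
    MeasureTheory.Measure.pi (fun _ : Fin k => bernoulliMeasure q) ↑F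
      = ∑ B ∈ F, (W q.toNNReal (1 - q).toNNReal B : ℝ≥0∞) := by
  classical
  have h1 : (↑F : Set (Fin k → Bool)) = ⋃ B ∈ F, {B} := (Set.biUnion_of_singleton _).symm
  rw [h1, MeasureTheory.measure_biUnion_finset]
  · exact Finset.sum_congr rfl fun B _ => pi_bern_singleton q B
  · intro a _ b _ hab
    exact Set.disjoint_singleton.mpr hab
  · exact fun B _ => measurableSet_singleton B

end Bridge

section Analytic

lemma one_sub_pow_ge {q : ℝ} (hq0 : 0 < q) (hq1 : q ≤ 1) {c : ℕ} (hc : 1 ≤ c) :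
    Real.exp (-(1 / (q * c))) ≤ 1 - (1 - q) ^ c := by
  have hc0 : (0:ℝ) < c := by exact_mod_cast hc
  have hqc : 0 < q * c := mul_pos hq0 hc0
  have h1qc : (0:ℝ) < 1 + q * c := by linarith
  have h1 : (1 - q) ^ c ≤ Real.exp (-q) ^ c :=
    pow_le_pow_left₀ (by linarith) (by have := Real.add_one_le_exp (-q); linarith) c
  have h1' : Real.exp (-q) ^ c = Real.exp (-(q * c)) := by
    rw [← Real.exp_nat_mul]
    congr 1
    ring
  have h2 : Real.exp (-(q * c)) ≤ 1 / (1 + q * c) := by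
    rw [Real.exp_neg, one_div]
    exact inv_anti₀ h1qc (by have := Real.add_one_le_exp (q * c); linarith)
  have h4 : (1 - q) ^ c ≤ 1 / (1 + q * c) := by
    rw [h1'] at h1
    exact h1.trans h2
  have h5 : Real.exp (-(1 / (q * c))) ≤ 1 / (1 + 1 / (q * c)) := by
    rw [Real.exp_neg, one_div (1 + 1 / (q * c))]
    refine inv_anti₀ (by positivity) ?_
    have := Real.add_one_le_exp (1 / (q * c))
    linarith
  have h6 : 1 / (1 + 1 / (q * c)) = 1 - 1 / (1 + q * c) := by
    rw [eq_sub_iff_add_eq]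
    field_simp
    ring
  calc Real.exp (-(1 / (q * c))) ≤ 1 / (1 + 1 / (q * c)) := h5
    _ = 1 - 1 / (1 + q * c) := h6
    _ ≤ 1 - (1 - q) ^ c := by linarith

end Analytic

section Select

lemma select {k L : ℕ} (σ : Fin L → Finset (Fin k)) {q : ℝ} (hq0 : 0 < q) (hk : 1 ≤ k)
    (hL2 : 2 * (L : ℝ) ≤ k) (hbud : 4 * (L : ℝ) ≤ q * k * Real.log k) :
    ∃ v : Fin k, (∀ t, v ∈ σ t → 2 ≤ (σ t).card) ∧
      ∑ t ∈ Finset.univ.filter (fun t => v ∈ σ t), 1 / (q * (((σ t).card : ℝ) - 1))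
        ≤ Real.log k := by
  classical
  set c : Fin L → ℝ := fun t => 1 / (q * (((σ t).card : ℝ) - 1)) with hc
  set S : Fin k → ℝ :=
    fun v => ∑ t ∈ Finset.univ.filter (fun t => v ∈ σ t), c t with hS
  set Bad : Finset (Fin k) :=
    Finset.univ.biUnion (fun t : Fin L => if (σ t).card ≤ 1 then σ t else ∅) with hBad
  have hBadcard : (Bad.card : ℝ) ≤ L := by
    have h1 : Bad.card ≤ ∑ t : Fin L, (if (σ t).card ≤ 1 then σ t else ∅).card :=
      Finset.card_biUnion_le
    have h2 : ∑ t : Fin L, (if (σ t).card ≤ 1 then σ t else ∅).card ≤ ∑ _t : Fin L, 1 :=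
      Finset.sum_le_sum fun t _ => by split <;> simp_all
    have h3 : Bad.card ≤ L := by simpa using h1.trans h2
    exact_mod_cast h3
  have hGoodProp : ∀ v, v ∉ Bad → ∀ t, v ∈ σ t → 2 ≤ (σ t).card := by
    intro v hv t hvt
    by_contra hcard
    push_neg at hcard
    exact hv (Finset.mem_biUnion.mpr ⟨t, Finset.mem_univ t,
      by rw [if_pos (by omega)]; exact hvt⟩)
  set Good : Finset (Fin k) := Finset.univ \ Bad with hGood
  have hGoodcard : (k : ℝ) - L ≤ Good.card := by
    have h1 : Good.card = k - Bad.card := by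
      rw [hGood, Finset.card_sdiff_of_subset (Finset.subset_univ _), Finset.card_univ, Fintype.card_fin]
    have h2 : Bad.card ≤ k := by
      have := Finset.card_le_card (Finset.subset_univ Bad)
      simpa using this
    rw [h1, Nat.cast_sub h2]
    linarith
  have hk0 : (1:ℝ) ≤ k := by exact_mod_cast hk
  have hLk : (L : ℝ) ≤ (k : ℝ) / 2 := by linarith
  have hGoodpos : (0:ℝ) < Good.card := by linarith
  have hGoodne : Good.Nonempty := by
    rw [← Finset.card_pos]
    exact_mod_cast hGoodpos
  have hSnonneg : ∀ v, 0 ≤ S v := by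
    intro v
    refine Finset.sum_nonneg fun t ht => ?_
    have hvt : v ∈ σ t := (Finset.mem_filter.mp ht).2
    have h1 : (1:ℝ) ≤ ((σ t).card : ℝ) := by
      exact_mod_cast Finset.card_pos.mpr ⟨v, hvt⟩
    exact div_nonneg one_pos.le (mul_nonneg hq0.le (by linarith))
  have hper : ∀ t : Fin L, ((σ t).card : ℝ) * c t ≤ 2 / q := by
    intro t
    by_cases h2 : 2 ≤ (σ t).card
    · have hN : (2:ℝ) ≤ ((σ t).card : ℝ) := by exact_mod_cast h2
      have hN1 : (0:ℝ) < ((σ t).card : ℝ) - 1 := by linarith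
      simp only [hc]
      rw [mul_one_div, div_le_div_iff₀ (by positivity) hq0]
      nlinarith
    · push_neg at h2
      have hcase : (σ t).card = 0 ∨ (σ t).card = 1 := by omega
      rcases hcase with h | h <;> simp only [hc, h] <;> norm_num <;> all_goals positivity
  have hswap : ∑ v ∈ Finset.univ, S v = ∑ t : Fin L, ((σ t).card : ℝ) * c t := by
    simp only [hS, Finset.sum_filter]
    rw [Finset.sum_comm]
    refine Finset.sum_congr rfl fun t _ => ?_
    rw [← Finset.sum_filter, Finset.filter_univ_mem, Finset.sum_const, nsmul_eq_mul]
  have htotal : ∑ v ∈ Finset.univ, S v ≤ (L : ℝ) * (2 / q) := by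
    rw [hswap]
    calc ∑ t : Fin L, ((σ t).card : ℝ) * c t ≤ ∑ _t : Fin L, 2 / q :=
          Finset.sum_le_sum fun t _ => hper t
      _ = (L : ℝ) * (2 / q) := by
          rw [Finset.sum_const, Finset.card_univ, Fintype.card_fin, nsmul_eq_mul]
  have hGoodsum : ∑ v ∈ Good, S v ≤ (L:ℝ) * (2/q) :=
    (Finset.sum_le_sum_of_subset_of_nonneg (Finset.subset_univ Good)
      fun v _ _ => hSnonneg v).trans htotal
  have hlogk : 0 ≤ Real.log k := Real.log_nonneg hk0
  have hcmp : ∑ v ∈ Good, S v ≤ ∑ _v ∈ Good, Real.log k := by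
    rw [Finset.sum_const, nsmul_eq_mul]
    have e1 : (L:ℝ) * (2/q) = 2*L/q := by ring
    have h2 : (L:ℝ)*(2/q) ≤ (k:ℝ)/2 * Real.log k := by
      rw [e1, div_le_iff₀ hq0]
      have e2 : (k:ℝ)/2*Real.log k*q = (q*(k:ℝ)*Real.log k)/2 := by ring
      rw [e2]
      linarith
    have h3 : (k:ℝ)/2 ≤ Good.card := by linarith
    have h4 : (k:ℝ)/2 * Real.log k ≤ (Good.card : ℝ) * Real.log k :=
      mul_le_mul_of_nonneg_right h3 hlogk
    linarith
  obtain ⟨v, hvG, hvle⟩ := Finset.exists_le_of_sum_le hGoodne hcmp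
  refine ⟨v, hGoodProp v (Finset.mem_sdiff.mp hvG).2, ?_⟩
  exact hvle

end Select

section Receiver

def nb {k : ℕ} (B : Fin k → Bool) : Finset (Fin k) :=
  Finset.univ.filter fun s => B s = true

lemma receiver_bound {k L : ℕ} (σ : Fin L → Finset (Fin k)) {q : ℝ}
    (hq0 : 0 < q) (hq1 : q ≤ 1) (hk : 1 ≤ k) (hqk : 1 ≤ q * k)
    (hL2 : 2 * (L : ℝ) ≤ k) (hbud : 4 * (L : ℝ) ≤ q * k * Real.log k) :
    MeasureTheory.Measure.pi (fun _ : Fin k => bernoulliMeasure q)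
      {B : Fin k → Bool | ∀ v ∈ nb B, ∃ t, σ t ∩ nb B = {v}}
      ≤ ENNReal.ofReal (1 - 1 / (k : ℝ) ^ 2) := by
  classical
  haveI := bern_prob hq0.le hq1
  set x := q.toNNReal with hx
  set y := (1 - q).toNNReal with hy
  have hxy : x + y = 1 := xy_total hq0.le hq1
  have hcoe_x : ((x : ℝ≥0) : ℝ) = q := Real.coe_toNNReal _ hq0.le
  have hcoe_y : ((y : ℝ≥0) : ℝ) = 1 - q := Real.coe_toNNReal _ (by linarith)
  have hk0 : (0:ℝ) < k := by exact_mod_cast hk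
  obtain ⟨v, hv2, hvS⟩ := select σ hq0 hk hL2 hbud
  set R : Finset (Fin L) := Finset.univ.filter (fun t => v ∈ σ t) with hR
  set WF : Finset (Fin k → Bool) := Finset.univ.filter
    (fun B => B v = true ∧ ∀ t ∈ R, ∃ w ∈ (σ t).erase v, B w = true) with hWF
  -- inclusion of the witness event in the failure event
  have hsub : (↑WF : Set (Fin k → Bool))
      ⊆ {B : Fin k → Bool | ∀ v ∈ nb B, ∃ t, σ t ∩ nb B = {v}}ᶜ := by
    intro B hB
    obtain ⟨-, hBv, hall⟩ := Finset.mem_filter.mp (Finset.mem_coe.mp hB)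
    intro hE
    have hvnb : v ∈ nb B := Finset.mem_filter.mpr ⟨Finset.mem_univ v, hBv⟩
    obtain ⟨t, ht⟩ := hE v hvnb
    by_cases hvt : v ∈ σ t
    · have htR : t ∈ R := Finset.mem_filter.mpr ⟨Finset.mem_univ t, hvt⟩
      obtain ⟨w, hw, hBw⟩ := hall t htR
      have hwv : w ≠ v := (Finset.mem_erase.mp hw).1
      have hwσ : w ∈ σ t := (Finset.mem_erase.mp hw).2
      have hmem : w ∈ σ t ∩ nb B := Finset.mem_inter.mpr
        ⟨hwσ, Finset.mem_filter.mpr ⟨Finset.mem_univ w, hBw⟩⟩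
      rw [ht] at hmem
      exact hwv (Finset.mem_singleton.mp hmem)
    · have hmem : v ∈ σ t ∩ nb B := ht ▸ Finset.mem_singleton_self v
      exact hvt (Finset.mem_inter.mp hmem).1
  -- witness sum as an expectation of a product of indicators
  have hWFsum : (∑ B ∈ WF, W x y B) = ∑ B : Fin k → Bool, W x y B *
      ((if B v then 1 else 0) *
        ∏ t ∈ R, (if ∃ w ∈ (σ t).erase v, B w = true then 1 else 0)) := by
    rw [hWF, Finset.sum_filter]
    refine Finset.sum_congr rfl fun B _ => ?_
    by_cases hB : B v = true ∧ ∀ t ∈ R, ∃ w ∈ (σ t).erase v, B w = true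
    · rw [if_pos hB, if_pos hB.1]
      have hone : ∏ t ∈ R, (if ∃ w ∈ (σ t).erase v, B w = true then (1:ℝ≥0) else 0) = 1 :=
        Finset.prod_eq_one fun t ht => if_pos (hB.2 t ht)
      rw [hone, one_mul, mul_one]
    · rw [if_neg hB]
      by_cases hBv : B v = true
      · have hnall : ¬ ∀ t ∈ R, ∃ w ∈ (σ t).erase v, B w = true := fun h => hB ⟨hBv, h⟩
        push_neg at hnall
        obtain ⟨t, htR, hnone⟩ := hnall
        have hzero : (if ∃ w ∈ (σ t).erase v, B w = true then (1:ℝ≥0) else 0) = 0 :=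
          if_neg (by
            rintro ⟨w, hw, hBw⟩
            exact absurd hBw (by simpa using hnone w hw))
        rw [Finset.prod_eq_zero htR hzero, mul_zero, mul_zero]
      · rw [if_neg hBv, zero_mul, mul_zero]
  -- Harris inequalities
  have hEprod : ∏ t ∈ R, (∑ B : Fin k → Bool, W x y B *
        (if ∃ w ∈ (σ t).erase v, B w = true then 1 else 0))
      ≤ ∑ B : Fin k → Bool, W x y B *
        ∏ t ∈ R, (if ∃ w ∈ (σ t).erase v, B w = true then 1 else 0) :=
    harris_prod hxy R _ (fun t _ => monotone_hitInd _)
  have hHfull : x * ∏ t ∈ R, (∑ B : Fin k → Bool, W x y B *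
        (if ∃ w ∈ (σ t).erase v, B w = true then 1 else 0))
      ≤ ∑ B ∈ WF, W x y B := by
    rw [hWFsum]
    calc x * ∏ t ∈ R, (∑ B : Fin k → Bool, W x y B *
            (if ∃ w ∈ (σ t).erase v, B w = true then 1 else 0))
        = (∑ B : Fin k → Bool, W x y B * (if B v then 1 else 0))
            * ∏ t ∈ R, (∑ B : Fin k → Bool, W x y B *
              (if ∃ w ∈ (σ t).erase v, B w = true then 1 else 0)) := by
          rw [E_coord hxy v]
      _ ≤ (∑ B : Fin k → Bool, W x y B * (if B v then 1 else 0))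
            * (∑ B : Fin k → Bool, W x y B *
              ∏ t ∈ R, (if ∃ w ∈ (σ t).erase v, B w = true then 1 else 0)) :=
          mul_le_mul_of_nonneg_left hEprod zero_le
      _ ≤ ∑ B : Fin k → Bool, W x y B * ((if B v then 1 else 0) *
              ∏ t ∈ R, (if ∃ w ∈ (σ t).erase v, B w = true then 1 else 0)) :=
          harris hxy k _ _ (monotone_coordInd v)
            (monotone_finset_prod R _ fun t _ => monotone_hitInd _)
  -- cardinality facts
  have hcard : ∀ t ∈ R, 1 ≤ ((σ t).erase v).card
      ∧ (((σ t).erase v).card : ℝ) = ((σ t).card : ℝ) - 1 := by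
    intro t ht
    have hvt : v ∈ σ t := (Finset.mem_filter.mp ht).2
    have h2 : 2 ≤ (σ t).card := hv2 t hvt
    have he : ((σ t).erase v).card = (σ t).card - 1 := Finset.card_erase_of_mem hvt
    refine ⟨by omega, ?_⟩
    rw [he, Nat.cast_sub (by omega)]
    norm_num
  -- real value of hitting probabilities
  have hEh : ∀ t ∈ R, ((∑ B : Fin k → Bool, W x y B *
        (if ∃ w ∈ (σ t).erase v, B w = true then 1 else 0) : ℝ≥0) : ℝ)
      = 1 - (1 - q) ^ ((σ t).erase v).card := by
    intro t ht
    have h1 := E_hit hxy ((σ t).erase v)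
    have h2 : ((((∑ B : Fin k → Bool, W x y B *
        (if ∃ w ∈ (σ t).erase v, B w = true then 1 else 0)) + y ^ ((σ t).erase v).card : ℝ≥0)) : ℝ)
        = 1 := by rw [h1]; norm_num
    rw [NNReal.coe_add, NNReal.coe_pow, hcoe_y] at h2
    linarith
  -- lower bound for the product, via exp
  have hsum_le : ∑ t ∈ R, 1 / (q * (((σ t).erase v).card : ℝ)) ≤ Real.log k := by
    calc ∑ t ∈ R, 1 / (q * (((σ t).erase v).card : ℝ))
        = ∑ t ∈ R, 1 / (q * (((σ t).card : ℝ) - 1)) :=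
          Finset.sum_congr rfl fun t ht => by rw [(hcard t ht).2]
      _ ≤ Real.log k := hvS
  have hprodlb : Real.exp (-Real.log k)
      ≤ ∏ t ∈ R, ((∑ B : Fin k → Bool, W x y B *
          (if ∃ w ∈ (σ t).erase v, B w = true then 1 else 0) : ℝ≥0) : ℝ) := by
    calc Real.exp (-Real.log k)
        ≤ Real.exp (-(∑ t ∈ R, 1 / (q * (((σ t).erase v).card : ℝ)))) :=
          Real.exp_le_exp.mpr (by linarith)
      _ = ∏ t ∈ R, Real.exp (-(1 / (q * (((σ t).erase v).card : ℝ)))) := by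
          rw [← Real.exp_sum]
          congr 1
          rw [Finset.sum_neg_distrib]
      _ ≤ ∏ t ∈ R, ((∑ B : Fin k → Bool, W x y B *
            (if ∃ w ∈ (σ t).erase v, B w = true then 1 else 0) : ℝ≥0) : ℝ) := by
          refine Finset.prod_le_prod (fun t _ => (Real.exp_pos _).le) (fun t ht => ?_)
          rw [hEh t ht]
          exact one_sub_pow_ge hq0 hq1 (hcard t ht).1
  -- real lower bound on the witness mass
  have hwitreal : 1 / (k : ℝ) ^ 2 ≤ ((∑ B ∈ WF, W x y B : ℝ≥0) : ℝ) := by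
    have hcast : ((x : ℝ≥0) : ℝ) * ∏ t ∈ R, ((∑ B : Fin k → Bool, W x y B *
          (if ∃ w ∈ (σ t).erase v, B w = true then 1 else 0) : ℝ≥0) : ℝ)
        ≤ ((∑ B ∈ WF, W x y B : ℝ≥0) : ℝ) := by
      exact_mod_cast hHfull
    have h1k : 1 / (k : ℝ) ≤ q := by
      rw [div_le_iff₀ hk0]
      linarith
    have hexp1k : Real.exp (-Real.log k) = 1 / (k : ℝ) := by
      rw [Real.exp_neg, Real.exp_log hk0, one_div]
    calc 1 / (k : ℝ) ^ 2 = (1 / k) * (1 / k) := by ring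
      _ ≤ q * (1 / k) := mul_le_mul_of_nonneg_right h1k (by positivity)
      _ ≤ q * ∏ t ∈ R, ((∑ B : Fin k → Bool, W x y B *
            (if ∃ w ∈ (σ t).erase v, B w = true then 1 else 0) : ℝ≥0) : ℝ) := by
          refine mul_le_mul_of_nonneg_left ?_ hq0.le
          rw [← hexp1k]
          exact hprodlb
      _ ≤ ((∑ B ∈ WF, W x y B : ℝ≥0) : ℝ) := by rw [← hcoe_x]; exact hcast
  -- measure-theoretic conclusion
  set ν := MeasureTheory.Measure.pi (fun _ : Fin k => bernoulliMeasure q) with hν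
  haveI : MeasureTheory.IsProbabilityMeasure ν := by
    rw [hν]; infer_instance
  set E : Set (Fin k → Bool) := {B : Fin k → Bool | ∀ v ∈ nb B, ∃ t, σ t ∩ nb B = {v}}
    with hE
  have hEmeas : MeasurableSet Eᶜ := (Set.to_countable Eᶜ).measurableSet
  have hwitmeas : ENNReal.ofReal (1 / (k : ℝ) ^ 2) ≤ ν Eᶜ := by
    calc ENNReal.ofReal (1 / (k : ℝ) ^ 2)
        ≤ ((∑ B ∈ WF, W x y B : ℝ≥0) : ℝ≥0∞) := by
          rw [ENNReal.ofReal]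
          exact ENNReal.coe_le_coe.mpr (Real.toNNReal_le_iff_le_coe.mpr hwitreal)
      _ = ν ↑WF := by
          rw [hν, pi_bern_finset q WF, ← hx, ← hy, ENNReal.coe_finset_sum]
      _ ≤ ν Eᶜ := MeasureTheory.measure_mono hsub
  have hcompl : ν E = 1 - ν Eᶜ := by
    have := MeasureTheory.prob_compl_eq_one_sub (μ := ν) hEmeas
    rw [compl_compl] at this
    exact this
  rw [hcompl]
  calc 1 - ν Eᶜ ≤ 1 - ENNReal.ofReal (1 / (k : ℝ) ^ 2) := tsub_le_tsub_left hwitmeas 1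
    _ = ENNReal.ofReal (1 - 1 / (k : ℝ) ^ 2) := by
        rw [ENNReal.ofReal_sub _ (by positivity : (0:ℝ) ≤ 1 / (k:ℝ)^2), ENNReal.ofReal_one]

end Receiver

section Outer

lemma cover_factor {m k L : ℕ} (σ : Fin L → Finset (Fin k)) {q : ℝ}
    (h0 : 0 ≤ q) (h1 : q ≤ 1) :
    randomGraphMeasure m k q {A | Covers σ A}
      = (MeasureTheory.Measure.pi (fun _ : Fin k => bernoulliMeasure q)
          {B : Fin k → Bool | ∀ v ∈ nb B, ∃ t, σ t ∩ nb B = {v}}) ^ m := by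
  haveI := bern_prob h0 h1
  unfold randomGraphMeasure
  have hset : {A : Fin m → Fin k → Bool | Covers σ A}
      = Set.pi Set.univ (fun _ : Fin m =>
          {B : Fin k → Bool | ∀ v ∈ nb B, ∃ t, σ t ∩ nb B = {v}}) := by
    ext A
    simp only [Set.mem_setOf_eq, Set.mem_pi, Set.mem_univ, forall_true_left]
    constructor
    · intro h u v hv
      exact h u v hv
    · intro h u v hv
      exact h u v hv
  rw [hset, MeasureTheory.Measure.pi_pi]
  rw [Finset.prod_const, Finset.card_univ, Fintype.card_fin]

end Outer

end RadioAux

set_option maxHeartbeats 2000000 in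
/-- **Coverage probability of a single short schedule.**
For large `n` and `20·ln n ≤ Δ ≤ n^0.1`, with `η = ⌊n^0.12⌋`, `m = η⁸`, and
`q = Δ/(2η)`: for every length `L < Δ·ln n/100` and every transmission schedule
`σ : Fin L → Finset (Fin η)`, the probability that `σ` covers the random
network is at most `exp(−η⁶)`. -/
theorem single_schedule_coverage_probability :
    ∃ n₀ : ℕ, ∀ n : ℕ, n ≥ n₀ → ∀ Δ : ℝ,
      20 * Real.log n ≤ Δ → Δ ≤ (n : ℝ) ^ (0.1 : ℝ) →
      ∀ η m : ℕ, η = ⌊(n : ℝ) ^ (0.12 : ℝ)⌋₊ → m = η ^ 8 →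
      ∀ (L : ℕ), (L : ℝ) < Δ * Real.log n / 100 →
      ∀ σ : Fin L → Finset (Fin η),
        randomGraphMeasure m η (Δ / (2 * η)) {A | Covers σ A} ≤
          ENNReal.ofReal (Real.exp (-((η : ℝ) ^ 6))) := by
  classical
  use 4 ^ 200
  intro n hn Δ hΔ1 hΔ2 η m hη hm L hL σ
  subst hm
  -- basic numeric facts
  have hncast : ((4:ℝ) ^ (200:ℕ)) ≤ (n : ℝ) := by
    have h1 : ((4 ^ 200 : ℕ) : ℝ) ≤ ((n : ℕ) : ℝ) := Nat.cast_le.mpr hn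
    rw [Nat.cast_pow] at h1
    exact_mod_cast h1
  have hn1 : (1:ℝ) ≤ (n : ℝ) := le_trans (by norm_num) hncast
  have hn0 : (0:ℝ) < (n : ℝ) := lt_of_lt_of_le one_pos hn1
  have hlog4 : (1:ℝ) ≤ Real.log 4 := by
    have h1 : Real.exp 1 ≤ 4 := le_trans Real.exp_one_lt_d9.le (by norm_num)
    calc (1:ℝ) = Real.log (Real.exp 1) := (Real.log_exp 1).symm
      _ ≤ Real.log 4 := Real.log_le_log (Real.exp_pos 1) h1
  have hlogn : (200:ℝ) ≤ Real.log n := by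
    calc (200:ℝ) = 200 * 1 := by norm_num
      _ ≤ 200 * Real.log 4 := by linarith
      _ = Real.log ((4:ℝ) ^ (200:ℕ)) := by rw [Real.log_pow]; push_cast; ring
      _ ≤ Real.log n := Real.log_le_log (by positivity) hncast
  have hΔ0 : (0:ℝ) < Δ := lt_of_lt_of_le (by linarith) hΔ1
  -- powers of n
  have hpow_ge : ∀ a b : ℝ, 0 ≤ a → a ≤ b → (n:ℝ) ^ (a:ℝ) ≤ (n:ℝ) ^ (b:ℝ) :=
    fun a b _ hab => Real.rpow_le_rpow_of_exponent_le hn1 hab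
  have hbase : ∀ (c : ℝ), 0 < c → ((4:ℝ) ^ (200:ℕ)) ^ (c:ℝ) ≤ (n:ℝ) ^ (c:ℝ) :=
    fun c hc => Real.rpow_le_rpow (by positivity) hncast hc.le
  have h4c : ∀ (c : ℝ) (k : ℕ), (200:ℝ) * c = (k:ℝ) → ((4:ℝ) ^ (200:ℕ)) ^ (c:ℝ) = (4:ℝ) ^ (k:ℕ) := by
    intro c k hck
    rw [← Real.rpow_natCast (4:ℝ) 200, ← Real.rpow_mul (by norm_num), ← Real.rpow_natCast (4:ℝ) k]
    congr 1
    all_goals push_cast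
    all_goals linarith
  have hn001 : (4:ℝ) ≤ (n:ℝ) ^ (0.01:ℝ) := by
    calc (4:ℝ) ≤ (4:ℝ) ^ (2:ℕ) := by norm_num
      _ = ((4:ℝ) ^ (200:ℕ)) ^ (0.01:ℝ) := (h4c 0.01 2 (by norm_num)).symm
      _ ≤ (n:ℝ) ^ (0.01:ℝ) := hbase 0.01 (by norm_num)
  have hP2 : (2:ℝ) ≤ (n : ℝ) ^ (0.12 : ℝ) := by
    calc (2:ℝ) ≤ (4:ℝ) ^ (24:ℕ) := by norm_num
      _ = ((4:ℝ) ^ (200:ℕ)) ^ (0.12:ℝ) := (h4c 0.12 24 (by norm_num)).symm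
      _ ≤ (n:ℝ) ^ (0.12:ℝ) := hbase 0.12 (by norm_num)
  clear hn hncast hbase h4c
  have hPpos : (0:ℝ) < (n : ℝ) ^ (0.12 : ℝ) := by positivity
  have hηup : (η : ℝ) ≤ (n : ℝ) ^ (0.12 : ℝ) := by
    rw [hη]; exact Nat.floor_le hPpos.le
  have hηlow1 : (n : ℝ) ^ (0.12 : ℝ) - 1 < (η : ℝ) := by
    rw [hη]; exact Nat.sub_one_lt_floor _
  have hηlow : (n : ℝ) ^ (0.12 : ℝ) / 2 ≤ (η : ℝ) := by linarith
  have hη1 : 1 ≤ η := by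
    rw [hη]
    exact Nat.le_floor (by push_cast; linarith)
  have hηR : (1:ℝ) ≤ (η : ℝ) := by exact_mod_cast hη1
  have hηpos : (0:ℝ) < (η : ℝ) := lt_of_lt_of_le one_pos hηR
  set q : ℝ := Δ / (2 * (η:ℝ)) with hq
  clear_value q
  have hq0 : 0 < q := by rw [hq]; positivity
  have hq1 : q ≤ 1 := by
    rw [hq, div_le_one (by positivity)]
    calc Δ ≤ (n:ℝ) ^ (0.1:ℝ) := hΔ2
      _ ≤ (n:ℝ) ^ (0.12:ℝ) := hpow_ge 0.1 0.12 (by norm_num) (by norm_num)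
      _ ≤ 2 * (η:ℝ) := by linarith
  have hqη : q * (η:ℝ) = Δ / 2 := by
    rw [hq]
    field_simp
  have hqk : 1 ≤ q * (η:ℝ) := by
    rw [hqη]
    linarith
  -- bound on L
  have hlog_le : Real.log n ≤ 100 * (n:ℝ) ^ (0.01:ℝ) := by
    have h := Real.log_le_rpow_div hn0.le (by norm_num : (0:ℝ) < 0.01)
    rw [div_eq_mul_inv] at h
    norm_num at h
    linarith
  have hL11 : (L : ℝ) ≤ (n:ℝ) ^ (0.11:ℝ) := by
    have h1 : Δ * Real.log n / 100 ≤ (n:ℝ)^(0.1:ℝ) * (100 * (n:ℝ)^(0.01:ℝ)) / 100 := by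
      apply div_le_div_of_nonneg_right ?_ (by norm_num)
      · exact mul_le_mul hΔ2 hlog_le (by positivity) (by positivity)
    have h2 : (n:ℝ)^(0.1:ℝ) * (100 * (n:ℝ)^(0.01:ℝ)) / 100 = (n:ℝ)^(0.1:ℝ) * (n:ℝ)^(0.01:ℝ) := by
      ring
    have h3 : (n:ℝ)^(0.1:ℝ) * (n:ℝ)^(0.01:ℝ) = (n:ℝ)^(0.11:ℝ) := by
      rw [← Real.rpow_add hn0]
      norm_num
    linarith
  have hsplit12 : (n:ℝ)^(0.12:ℝ) = (n:ℝ)^(0.11:ℝ) * (n:ℝ)^(0.01:ℝ) := by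
    rw [← Real.rpow_add hn0]
    norm_num
  have hL2 : 2 * (L : ℝ) ≤ (η:ℝ) := by
    have h1 : 2 * (L:ℝ) ≤ 2 * (n:ℝ)^(0.11:ℝ) := by linarith
    have h2 : 4 * (n:ℝ)^(0.11:ℝ) ≤ (n:ℝ)^(0.12:ℝ) := by
      rw [hsplit12]
      have := mul_le_mul_of_nonneg_left hn001 (by positivity : (0:ℝ) ≤ (n:ℝ)^(0.11:ℝ))
      linarith [this]
    linarith
  -- budget
  have hlogη : Real.log ((n:ℝ)^(0.12:ℝ)) - Real.log 2 ≤ Real.log (η:ℝ) := by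
    have h1 : Real.log ((n:ℝ)^(0.12:ℝ) / 2) ≤ Real.log (η:ℝ) :=
      Real.log_le_log (by positivity) hηlow
    rw [Real.log_div (by positivity) (by norm_num)] at h1
    exact h1
  have hlog2 : Real.log 2 ≤ 1 := by
    have := Real.log_le_sub_one_of_pos (by norm_num : (0:ℝ) < 2)
    linarith
  have hlogη' : (0.08:ℝ) * Real.log n ≤ Real.log (η:ℝ) := by
    have h1 : Real.log ((n:ℝ)^(0.12:ℝ)) = 0.12 * Real.log n := Real.log_rpow hn0 _
    linarith
  have hlogηpos : (0:ℝ) ≤ Real.log (η:ℝ) := Real.log_nonneg hηR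
  have hbud : 4 * (L : ℝ) ≤ q * (η:ℝ) * Real.log (η:ℝ) := by
    rw [hqη]
    have h1 : 4 * (L:ℝ) ≤ Δ * Real.log n / 25 := by linarith
    have hmul : Δ * (0.08 * Real.log n) ≤ Δ * Real.log (η:ℝ) :=
      mul_le_mul_of_nonneg_left hlogη' hΔ0.le
    have h2 : Δ * Real.log n / 25 ≤ Δ / 2 * Real.log (η:ℝ) := by
      calc Δ * Real.log n / 25 = Δ * (0.08 * Real.log n) / 2 := by ring
        _ ≤ Δ * Real.log (η:ℝ) / 2 := by linarith
        _ = Δ / 2 * Real.log (η:ℝ) := by ring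
    linarith
  have h1η2 : (0:ℝ) ≤ 1 - 1 / (η:ℝ)^2 := by
    have h3 : 1 / (η:ℝ)^2 ≤ 1 := by
      rw [div_le_one (by positivity)]
      nlinarith [sq_nonneg ((η:ℝ) - 1)]
    linarith
  have hfinal : (1 - 1/(η:ℝ)^2) ^ (η^8) ≤ Real.exp (-((η : ℝ) ^ 6)) := by
    have h2 : 1 - 1/(η:ℝ)^2 ≤ Real.exp (-(1/(η:ℝ)^2)) := by
      have := Real.add_one_le_exp (-(1/(η:ℝ)^2))
      linarith
    calc (1 - 1/(η:ℝ)^2) ^ (η^8) ≤ (Real.exp (-(1/(η:ℝ)^2))) ^ (η^8) :=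
          pow_le_pow_left₀ h1η2 h2 _
      _ = Real.exp (((η^8 : ℕ):ℝ) * (-(1/(η:ℝ)^2))) := (Real.exp_nat_mul _ _).symm
      _ = Real.exp (-((η : ℝ) ^ 6)) := by
          congr 1
          push_cast
          field_simp
  -- apply the per-receiver bound
  rw [RadioAux.cover_factor σ hq0.le hq1]
  have hrec := RadioAux.receiver_bound σ hq0 hq1 hη1 hqk hL2 hbud
  calc (MeasureTheory.Measure.pi (fun _ : Fin η => bernoulliMeasure q)
        {B : Fin η → Bool | ∀ v ∈ RadioAux.nb B, ∃ t, σ t ∩ RadioAux.nb B = {v}}) ^ (η^8)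
      ≤ (ENNReal.ofReal (1 - 1 / (η:ℝ)^2)) ^ (η^8) := pow_le_pow_left' hrec (η^8)
    _ = ENNReal.ofReal ((1 - 1 / (η:ℝ)^2) ^ (η^8)) := (ENNReal.ofReal_pow h1η2 _).symm
    _ ≤ ENNReal.ofReal (Real.exp (-((η : ℝ) ^ 6))) := ENNReal.ofReal_le_ofReal hfinal
end

section
/- Let S be a nonempty finite set and let σ : Fin L → Finset S be a transmission schedule with L < |S|/2. Then there exists a sender s ∈ S that is not lost in σ (no round t has σ_t = {s}) and whose potential satisfies Φ_σ(s) ≤ 2L/|S|. -/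
/-- **Existence of a not-lost sender with small potential.**
If `S` is a nonempty finite set of senders and `σ : Fin L → Finset S` is a
transmission schedule with `L < |S|/2`, then there is a sender `s` that is not
lost (no round has `σ_t = {s}`) whose potential
`Φ_σ(s) = Σ_{t : s ∈ σ_t} 1/|σ_t|` is at most `2L/|S|`. -/
theorem exists_not_lost_low_potential
    {S : Type*} [Fintype S] [DecidableEq S] [Nonempty S]
    {L : ℕ} (σ : Fin L → Finset S)
    (hL : (L : ℝ) < (Fintype.card S : ℝ) / 2) :
    ∃ s : S, (∀ t : Fin L, σ t ≠ {s}) ∧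
      (∑ t ∈ Finset.univ.filter (fun t : Fin L => s ∈ σ t),
          (1 : ℝ) / (σ t).card) ≤
        2 * L / Fintype.card S := by
  classical
  set n := Fintype.card S with hn
  have hn1 : 1 ≤ n := Fintype.card_pos
  have hnR : (0:ℝ) < n := by exact_mod_cast hn1
  set Φ : S → ℝ := fun s =>
    ∑ t ∈ Finset.univ.filter (fun t : Fin L => s ∈ σ t), (1:ℝ)/(σ t).card with hΦ
  set B : Finset S := Finset.univ.filter (fun s => ∀ t, σ t ≠ {s}) with hB
  -- at most L lost senders
  have hlost : (Finset.univ.filter (fun s : S => ∃ t, σ t = {s})).card ≤ L := by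
    rcases Nat.eq_zero_or_pos L with hL0 | hLpos
    · subst hL0
      simp
    · have : Nonempty (Fin L) := ⟨⟨0, hLpos⟩⟩
      have hex : ∀ s : S, (∃ t, σ t = {s}) → ∃ t, σ t = {s} := fun _ h => h
      choose! f hf using hex
      have key : (Finset.univ.filter (fun s : S => ∃ t, σ t = {s})).card ≤
          (Finset.univ : Finset (Fin L)).card := by
        apply Finset.card_le_card_of_injOn f (fun s _ => Finset.mem_univ (f s))
        intro s1 h1 s2 h2 hfe
        have h1' := hf s1 (Finset.mem_filter.mp h1).2
        have h2' := hf s2 (Finset.mem_filter.mp h2).2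
        rw [hfe] at h1'
        have : ({s1} : Finset S) = {s2} := by rw [← h1', ← h2']
        exact Finset.singleton_injective this
      simpa using key
  -- B has at least n - L elements
  have hBcard : n - L ≤ B.card := by
    have heq : B = Finset.univ \ Finset.univ.filter (fun s : S => ∃ t, σ t = {s}) := by
      rw [hB, ← Finset.filter_not]
      congr 1
      ext s
      push_neg
      rfl
    rw [heq, Finset.card_sdiff_of_subset (Finset.filter_subset _ _), Finset.card_univ]
    omega
  have hLn : L ≤ n := by
    have : (n:ℝ)/2 ≤ n := by linarith
    have := hL.le.trans this
    exact_mod_cast this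
  have hBR : (n:ℝ) - L ≤ B.card := by
    have : ((n - L : ℕ) : ℝ) ≤ B.card := by exact_mod_cast hBcard
    rwa [Nat.cast_sub hLn] at this
  -- total potential is at most L
  have hΦnonneg : ∀ s : S, 0 ≤ Φ s := by
    intro s
    apply Finset.sum_nonneg
    intro t ht
    positivity
  have htot : ∑ s ∈ B, Φ s ≤ L := by
    have h1 : ∑ s ∈ B, Φ s ≤ ∑ s : S, Φ s :=
      Finset.sum_le_sum_of_subset_of_nonneg (Finset.subset_univ B)
        (fun s _ _ => hΦnonneg s)
    have h2 : ∑ s : S, Φ s = ∑ t : Fin L, ∑ s ∈ σ t, (1:ℝ)/(σ t).card := by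
      simp only [hΦ, Finset.sum_filter]
      rw [Finset.sum_comm]
      refine Finset.sum_congr rfl fun t _ => ?_
      rw [← Finset.sum_filter, Finset.filter_univ_mem]
    have h3 : ∑ t : Fin L, ∑ s ∈ σ t, (1:ℝ)/(σ t).card ≤ L := by
      calc ∑ t : Fin L, ∑ s ∈ σ t, (1:ℝ)/(σ t).card
          ≤ ∑ _t : Fin L, (1:ℝ) := by
            apply Finset.sum_le_sum
            intro t _
            rw [Finset.sum_const, nsmul_eq_mul]
            rcases Nat.eq_zero_or_pos (σ t).card with h | h
            · simp [h]
            · rw [mul_one_div, div_self (by exact_mod_cast h.ne')]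
        _ = L := by simp
    linarith
  -- averaging
  have hBne : B.Nonempty := by
    rw [← Finset.card_pos]
    have : (0:ℝ) < B.card := by
      have : (0:ℝ) ≤ L := by positivity
      linarith
    exact_mod_cast this
  have hkey : ∑ s ∈ B, Φ s ≤ ∑ _s ∈ B, 2 * (L:ℝ) / n := by
    rw [Finset.sum_const, nsmul_eq_mul]
    have hBhalf : (n:ℝ)/2 < B.card := by linarith
    have h2Ln : 0 ≤ 2 * (L:ℝ) / n := by positivity
    calc ∑ s ∈ B, Φ s ≤ (L:ℝ) := htot
      _ = ((n:ℝ)/2) * (2 * L / n) := by field_simp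
      _ ≤ (B.card : ℝ) * (2 * L / n) := by
          apply mul_le_mul_of_nonneg_right hBhalf.le h2Ln
  obtain ⟨s, hsB, hs⟩ := Finset.exists_le_of_sum_le hBne hkey
  refine ⟨s, ?_, hs⟩
  exact (Finset.mem_filter.mp hsB).2
end

section
/- For every natural number k ≥ 1 and every real p with 1/(2k) ≤ p ≤ 1/k, we have p·(1 − p)^{k−1} ≥ 1/(2·e·k). -/
/-- **Single-round success estimate of the Decay strategy.**
For every natural `k ≥ 1` and real `p` with `1/(2k) ≤ p ≤ 1/k`,
`p·(1 − p)^{k−1} ≥ 1/(2·e·k)`. -/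
theorem decay_single_round_success (k : ℕ) (hk : 1 ≤ k) (p : ℝ)
    (hp1 : 1 / (2 * k) ≤ p) (hp2 : p ≤ 1 / k) :
    1 / (2 * Real.exp 1 * k) ≤ p * (1 - p) ^ (k - 1) := by
  have hk' : (1:ℝ) ≤ (k:ℝ) := by exact_mod_cast hk
  have hkpos : (0:ℝ) < (k:ℝ) := by linarith
  have hppos : 0 < p := lt_of_lt_of_le (by positivity) hp1
  have hp1' : p ≤ 1 := hp2.trans (by rw [div_le_one hkpos]; exact hk')
  have hepos : (0:ℝ) < Real.exp 1 := Real.exp_pos 1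
  have he1 : (1:ℝ) ≤ Real.exp 1 := by
    have := Real.add_one_le_exp (1:ℝ); linarith
  have hbound : Real.exp (-1) ≤ (1 - p) ^ (k - 1) := by
    rcases Nat.eq_or_lt_of_le hk with h1 | h2
    · subst h1; simp
    · set m : ℕ := k - 1 with hm
      have hmpos : 0 < m := by omega
      have hm' : (0:ℝ) < (m:ℝ) := by exact_mod_cast hmpos
      have hkm : (k:ℝ) = (m:ℝ) + 1 := by
        have : k = m + 1 := by omega
        exact_mod_cast congrArg (Nat.cast : ℕ → ℝ) this
      have hexp : Real.exp (-(1/(m:ℝ))) ≤ 1 - 1/(k:ℝ) := by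
        have h1 : 1 + 1/(m:ℝ) ≤ Real.exp (1/(m:ℝ)) := by
          have := Real.add_one_le_exp (1/(m:ℝ)); linarith
        have hsum : 1 + 1/(m:ℝ) = (k:ℝ)/(m:ℝ) := by
          rw [hkm]; field_simp
        rw [Real.exp_neg]
        rw [inv_le_comm₀ (Real.exp_pos _) (by
          have hk2 : (1:ℝ) < (k:ℝ) := by exact_mod_cast h2
          have : 1/(k:ℝ) < 1 := by rw [div_lt_one hkpos]; exact hk2
          linarith)]
        calc ((1:ℝ) - 1/(k:ℝ))⁻¹ = (k:ℝ)/(m:ℝ) := by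
              rw [hkm]; field_simp; rw [add_sub_cancel_right, div_self hm'.ne']
          _ ≤ Real.exp (1/(m:ℝ)) := hsum ▸ h1
      have hstep : Real.exp (-(1/(m:ℝ))) ≤ 1 - p := by
        calc Real.exp (-(1/(m:ℝ))) ≤ 1 - 1/(k:ℝ) := hexp
          _ ≤ 1 - p := by linarith
      calc Real.exp (-1) = Real.exp (-(1/(m:ℝ))) ^ m := by
            rw [← Real.exp_nat_mul]; congr 1; field_simp
        _ ≤ (1 - p) ^ m := pow_le_pow_left₀ (Real.exp_pos _).le hstep m
  calc 1 / (2 * Real.exp 1 * k) = (1/(2*(k:ℝ))) * Real.exp (-1) := by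
        rw [Real.exp_neg]; field_simp
    _ ≤ p * (1 - p) ^ (k - 1) :=
        mul_le_mul hp1 hbound (Real.exp_pos _).le hppos.le
end

section
/- For every natural number k ≥ 1 and every real p with 1/(2k) ≤ p ≤ 1/k, we have k·p·(1 − p)^{k−1} ≥ 1/(2·e). -/
lemma aux_exp_bound (k : ℕ) (hk : 1 ≤ k) :
    Real.exp (-1) ≤ (1 - 1 / (k : ℝ)) ^ (k - 1) := by
  rcases Nat.eq_or_lt_of_le hk with h1 | h2
  · subst h1
    simpa using (Real.exp_le_one_iff).2 (by norm_num : (-1:ℝ) ≤ 0)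
  · -- k ≥ 2, let n = k - 1 ≥ 1
    obtain ⟨n, rfl⟩ : ∃ n, k = n + 1 := ⟨k - 1, (Nat.succ_pred_eq_of_pos (by omega)).symm⟩
    have hn : 1 ≤ n := by omega
    have hnR : (0 : ℝ) < n := by positivity
    have hkR : (0 : ℝ) < (n : ℝ) + 1 := by positivity
    have key : Real.exp (-(1 / n)) ≤ (n : ℝ) / (n + 1) := by
      have h := Real.add_one_le_exp (1 / (n : ℝ))
      rw [Real.exp_neg, inv_eq_one_div, div_le_div_iff₀ (Real.exp_pos _) hkR]
      have h2 : (n : ℝ) * (1 / n + 1) ≤ n * Real.exp (1 / n) :=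
        mul_le_mul_of_nonneg_left h hnR.le
      have h3 : (n : ℝ) * (1 / n + 1) = 1 * ((n : ℝ) + 1) := by field_simp; ring
      linarith [h2, h3.symm.le]
    have hexp : Real.exp (-1) = (Real.exp (-(1 / (n : ℝ)))) ^ n := by
      rw [← Real.exp_nat_mul]
      congr 1
      field_simp
    have hpow : (Real.exp (-(1 / (n : ℝ)))) ^ n ≤ ((n : ℝ) / (n + 1)) ^ n :=
      pow_le_pow_left₀ (Real.exp_pos _).le key n
    have heq : (1 - 1 / ((n : ℝ) + 1)) = (n : ℝ) / (n + 1) := by field_simp; ring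
    simp only [Nat.add_sub_cancel]
    push_cast
    rw [heq, hexp]
    exact hpow

/-- **Single-round progress estimate of the Decay strategy.**
For every natural `k ≥ 1` and real `p` with `1/(2k) ≤ p ≤ 1/k`,
`k·p·(1 − p)^{k−1} ≥ 1/(2·e)`. -/
theorem decay_single_round_progress (k : ℕ) (hk : 1 ≤ k) (p : ℝ)
    (hp1 : 1 / (2 * k) ≤ p) (hp2 : p ≤ 1 / k) :
    1 / (2 * Real.exp 1) ≤ k * p * (1 - p) ^ (k - 1) := by
  have hkR : (0 : ℝ) < k := by positivity
  have hkp : (1 : ℝ) / 2 ≤ k * p := by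
    rw [div_le_iff₀ (by positivity)] at hp1
    nlinarith
  have hp0 : 0 ≤ 1 - p := by
    have : p ≤ 1 := hp2.trans (by rw [div_le_one hkR]; exact_mod_cast hk)
    linarith
  have hmono : (1 - 1 / (k : ℝ)) ^ (k - 1) ≤ (1 - p) ^ (k - 1) := by
    apply pow_le_pow_left₀ (by
      have : (1 : ℝ) / k ≤ 1 := by rw [div_le_one hkR]; exact_mod_cast hk
      linarith)
    linarith
  have hexp := aux_exp_bound k hk
  have h1 : Real.exp (-1) ≤ (1 - p) ^ (k - 1) := hexp.trans hmono
  have hE : Real.exp (-1) = 1 / Real.exp 1 := by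
    rw [Real.exp_neg]; exact inv_eq_one_div _
  calc 1 / (2 * Real.exp 1) = (1 / 2) * Real.exp (-1) := by
        rw [hE]; ring
    _ ≤ (k * p) * ((1 - p) ^ (k - 1)) := by
        apply mul_le_mul hkp h1 (Real.exp_pos _).le (by linarith)
end

section
/- Let η ∈ ℕ with η ≥ 2, let Δ be a real with 2 ≤ Δ ≤ η, and set q = Δ/(2η). Let σ : Fin L → Finset (Fin η) be a transmission schedule and let s* ∈ Fin η be a sender that is not lost in σ (no round t has σ_t = {s*}) and whose potential satisfies Φ_σ(s*) ≤ Δ·(ln η)/(6η). Then, under the product Bernoulli(q) measure on ω : Fin η → Bool (modeling the random set of sender neighbors of one fixed receiver), the probability of the event {ω : ω s* = true, and for every round t with s* ∈ σ_t there exists j ∈ σ_t with j ≠ s* and ω j = true} is at least 1/η². (This is the per-receiver failure claim in the paper's acknowledgment lower bound: with probability at least 1/η², the receiver is a neighbor of s* yet never receives s*'s message because every transmission of s* collides.) -/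
open MeasureTheory

/-- The product Bernoulli(q) measure on `Fin η → Bool`, modeling the random set
of sender neighbors of one fixed receiver: `ω j = true` means sender `j` is
adjacent to the receiver. -/
noncomputable def productBernoulli (η : ℕ) (q : ℝ) : Measure (Fin η → Bool) :=
  Measure.pi fun _ : Fin η => bernoulliMeasure q

lemma bernoulliMeasure_singleton (q : ℝ) (b : Bool) :
    bernoulliMeasure q {b} = ENNReal.ofReal (if b then q else 1 - q) := by
  cases b <;> simp [bernoulliMeasure, Measure.dirac_apply]

instance (q : ℝ) : IsFiniteMeasure (bernoulliMeasure q) := by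
  constructor
  simp only [bernoulliMeasure, Measure.add_apply, Measure.smul_apply, smul_eq_mul,
    Measure.dirac_apply, Set.indicator_univ, Pi.one_apply, mul_one]
  exact ENNReal.add_lt_top.2 ⟨ENNReal.ofReal_lt_top, ENNReal.ofReal_lt_top⟩

lemma productBernoulli_singleton {η : ℕ} {q : ℝ} (hq0 : 0 ≤ q) (hq1 : q ≤ 1)
    (ω : Fin η → Bool) :
    productBernoulli η q {ω} = ENNReal.ofReal (∏ j, (if ω j then q else 1 - q)) := by
  rw [productBernoulli, ← Set.univ_pi_singleton ω, Measure.pi_pi]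
  rw [ENNReal.ofReal_prod_of_nonneg (fun j _ => by split <;> linarith)]
  exact Finset.prod_congr rfl fun j _ => bernoulliMeasure_singleton q (ω j)

lemma productBernoulli_finset {η : ℕ} {q : ℝ} (hq0 : 0 ≤ q) (hq1 : q ≤ 1)
    (S : Finset (Fin η → Bool)) :
    productBernoulli η q ↑S
      = ENNReal.ofReal (∑ ω ∈ S, ∏ j, (if ω j then q else 1 - q)) := by
  have hS : (S : Set (Fin η → Bool)) = ⋃ ω ∈ S, {ω} := by ext x; simp
  rw [hS, measure_biUnion_finset ?_ (fun _ _ => measurableSet_singleton _)]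
  · rw [ENNReal.ofReal_sum_of_nonneg
      (fun ω _ => Finset.prod_nonneg fun j _ => by split <;> linarith)]
    exact Finset.sum_congr rfl fun ω _ => productBernoulli_singleton hq0 hq1 ω
  · intro a _ b _ hab
    simp [Set.disjoint_singleton, hab]

lemma sum_prod_bool {η : ℕ} (g : Fin η → Bool → ℝ) :
    ∑ ω : Fin η → Bool, ∏ j, g j (ω j) = ∏ j, (g j true + g j false) := by
  rw [← Fintype.prod_sum fun j b => g j b]
  exact Finset.prod_congr rfl fun j _ => by simp [Fintype.sum_bool]

lemma fkg_prod {α : Type*} [DistribLattice α] [Fintype α] {ι : Type*} [DecidableEq ι]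
    (μ : α → ℝ) (hμ0 : 0 ≤ μ) (hμ : ∀ a b, μ a * μ b ≤ μ (a ⊓ b) * μ (a ⊔ b))
    (hsum : ∑ a, μ a = 1)
    (s : Finset ι) (f : ι → α → ℝ) (hf0 : ∀ i a, 0 ≤ f i a) (hfm : ∀ i, Monotone (f i)) :
    ∏ i ∈ s, (∑ a, μ a * f i a) ≤ ∑ a, μ a * ∏ i ∈ s, f i a := by
  classical
  induction s using Finset.induction_on with
  | empty => simp [hsum]
  | insert i s hi ih =>
    have hg0 : (0 : α → ℝ) ≤ fun a => ∏ j ∈ s, f j a :=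
      fun a => Finset.prod_nonneg fun j _ => hf0 j a
    have hgm : Monotone fun a => ∏ j ∈ s, f j a := fun a b hab =>
      Finset.prod_le_prod (fun j _ => hf0 j a) fun j _ => hfm j hab
    calc ∏ j ∈ insert i s, (∑ a, μ a * f j a)
        = (∑ a, μ a * f i a) * ∏ j ∈ s, (∑ a, μ a * f j a) := Finset.prod_insert hi
      _ ≤ (∑ a, μ a * f i a) * ∑ a, μ a * ∏ j ∈ s, f j a :=
          mul_le_mul_of_nonneg_left ih
            (Finset.sum_nonneg fun a _ => mul_nonneg (hμ0 a) (hf0 i a))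
      _ ≤ (∑ a, μ a) * ∑ a, μ a * (f i a * ∏ j ∈ s, f j a) :=
          fkg _ _ _ hμ0 (fun a => hf0 i a) hg0 (hfm i) hgm hμ
      _ = ∑ a, μ a * ∏ j ∈ insert i s, f j a := by
          rw [hsum, one_mul]
          exact Finset.sum_congr rfl fun a _ => by rw [Finset.prod_insert hi]

lemma one_sub_pow_lower {q : ℝ} (hq0 : 0 < q) (hq1 : q ≤ 1) {m : ℕ} (hm : 1 ≤ m) :
    Real.exp (-(1 / (q * m))) ≤ 1 - (1 - q) ^ m := by
  have hm0 : (0 : ℝ) < m := by exact_mod_cast hm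
  have hx : (0 : ℝ) < q * m := by positivity
  have h1 : (1 - q) ^ m * (1 + q * m) ≤ 1 := by
    have hber : 1 + q * m ≤ (1 + q) ^ m := by
      have := one_add_mul_le_pow (a := q) (by linarith) m
      calc 1 + q * m = 1 + (m : ℝ) * q := by ring
        _ ≤ (1 + q) ^ m := this
    calc (1 - q) ^ m * (1 + q * m) ≤ (1 - q) ^ m * (1 + q) ^ m :=
          mul_le_mul_of_nonneg_left hber (pow_nonneg (by linarith) m)
      _ = ((1 - q) * (1 + q)) ^ m := (mul_pow _ _ _).symm
      _ = (1 - q ^ 2) ^ m := by ring_nf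
      _ ≤ 1 := pow_le_one₀ (by nlinarith) (by nlinarith)
  have h2 : (1 - q) ^ m ≤ 1 / (1 + q * m) := by
    rw [le_div_iff₀ (by positivity)]; exact h1
  have h4 : Real.exp (-(1 / (q * m))) ≤ 1 - 1 / (1 + q * m) := by
    have hexp : 1 / (q * m) + 1 ≤ Real.exp (1 / (q * m)) := Real.add_one_le_exp _
    have hpos : (0 : ℝ) < 1 / (q * m) + 1 := by positivity
    have hh : Real.exp (-(1 / (q * m))) ≤ (1 / (q * m) + 1)⁻¹ := by
      rw [Real.exp_neg]
      exact inv_anti₀ hpos hexp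
    calc Real.exp (-(1 / (q * m))) ≤ (1 / (q * m) + 1)⁻¹ := hh
      _ = 1 - 1 / (1 + q * m) := by field_simp; ring
  linarith

/-- **Per-receiver failure probability in the acknowledgment lower bound.**
Let `η ≥ 2`, `2 ≤ Δ ≤ η`, `q = Δ/(2η)`. Let `σ : Fin L → Finset (Fin η)` be a
transmission schedule and `sStar` a sender that is not lost in `σ` and whose
potential `Φ_σ(sStar) = Σ_{t : sStar ∈ σ_t} 1/|σ_t|` is at most `Δ·ln η/(6η)`.
Then with probability at least `1/η²` (over the random neighborhood of a fixed
receiver), the receiver is a neighbor of `sStar` yet every transmission of `sStar`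
collides at the receiver. -/
theorem per_receiver_failure_probability
    (η : ℕ) (hη : 2 ≤ η) (Δ : ℝ) (hΔ1 : 2 ≤ Δ) (hΔ2 : Δ ≤ (η : ℝ))
    {L : ℕ} (σ : Fin L → Finset (Fin η)) (sStar : Fin η)
    (hNotLost : ∀ t : Fin L, σ t ≠ {sStar})
    (hPot : (∑ t ∈ Finset.univ.filter (fun t : Fin L => sStar ∈ σ t),
        (1 : ℝ) / (σ t).card) ≤ Δ * Real.log η / (6 * η)) :
    ENNReal.ofReal (1 / (η : ℝ) ^ 2) ≤
      productBernoulli η (Δ / (2 * η))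
        {ω | ω sStar = true ∧
          ∀ t : Fin L, sStar ∈ σ t → ∃ j ∈ σ t, j ≠ sStar ∧ ω j = true} := by
  classical
  have hη1 : (1 : ℝ) ≤ η := by exact_mod_cast Nat.one_le_of_lt hη
  have hηpos : (0 : ℝ) < η := by linarith
  set q : ℝ := Δ / (2 * η) with hqdef
  have hq0 : 0 < q := by
    apply div_pos <;> linarith
  have hq1 : q ≤ 1 := by
    rw [hqdef, div_le_one (by linarith)]; linarith
  -- reduce to a finite sum
  have hset : {ω : Fin η → Bool | ω sStar = true ∧
      ∀ t : Fin L, sStar ∈ σ t → ∃ j ∈ σ t, j ≠ sStar ∧ ω j = true}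
      = ↑(Finset.univ.filter (fun ω : Fin η → Bool => ω sStar = true ∧
        ∀ t : Fin L, sStar ∈ σ t → ∃ j ∈ σ t, j ≠ sStar ∧ ω j = true)) := by
    ext ω; simp
  rw [hset, productBernoulli_finset hq0.le hq1]
  apply ENNReal.ofReal_le_ofReal
  set w : (Fin η → Bool) → ℝ := fun ω => ∏ j, (if ω j then q else 1 - q) with hwdef
  have hw0 : ∀ ω, 0 ≤ w ω := fun ω => Finset.prod_nonneg fun j _ => by
    split <;> linarith
  set T : Finset (Fin L) := Finset.univ.filter (fun t : Fin L => sStar ∈ σ t) with hT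
  set f0 : (Fin η → Bool) → ℝ := fun ω => if ω sStar = true then 1 else 0 with hf0def
  set fc : Fin L → (Fin η → Bool) → ℝ :=
    fun t ω => if ∃ j ∈ σ t, j ≠ sStar ∧ ω j = true then 1 else 0 with hfcdef
  -- total mass one
  have htotal : ∑ ω : Fin η → Bool, w ω = 1 := by
    calc ∑ ω : Fin η → Bool, w ω = ∏ _j : Fin η, (q + (1 - q)) := by
          simpa using sum_prod_bool (η := η) (fun _ b => if b then q else 1 - q)
      _ = 1 := by simp
  -- supermodularity (in fact equality)
  have hbool_inf : ∀ x y : Bool, x ⊓ y = (x && y) := by decide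
  have hbool_sup : ∀ x y : Bool, x ⊔ y = (x || y) := by decide
  have hsup : ∀ a b : Fin η → Bool, w a * w b ≤ w (a ⊓ b) * w (a ⊔ b) := by
    intro a b
    apply le_of_eq
    simp only [hwdef]
    rw [← Finset.prod_mul_distrib, ← Finset.prod_mul_distrib]
    apply Finset.prod_congr rfl
    intro j _
    have hinf : (a ⊓ b) j = a j ⊓ b j := rfl
    have hsupj : (a ⊔ b) j = a j ⊔ b j := rfl
    rw [hinf, hsupj, hbool_inf, hbool_sup]
    cases haj : a j <;> cases hbj : b j <;> simp <;> ring
  -- monotonicity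
  have hmono_coord : ∀ (a b : Fin η → Bool), a ≤ b → ∀ j, a j = true → b j = true := by
    intro a b hab j hj
    have := hab j
    rw [hj] at this
    exact (le_antisymm this (Bool.le_true _)).symm
  have hmono0 : Monotone f0 := by
    intro a b hab
    simp only [hf0def]
    by_cases h : a sStar = true
    · rw [if_pos h, if_pos (hmono_coord a b hab sStar h)]
    · rw [if_neg h]; split <;> norm_num
  have hmonoc : ∀ t, Monotone (fc t) := by
    intro t a b hab
    simp only [hfcdef]
    by_cases h : ∃ j ∈ σ t, j ≠ sStar ∧ a j = true
    · obtain ⟨j, hjσ, hjne, hja⟩ := h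
      rw [if_pos ⟨j, hjσ, hjne, hja⟩, if_pos ⟨j, hjσ, hjne, hmono_coord a b hab j hja⟩]
    · rw [if_neg h]; split <;> norm_num
  have hfc0 : ∀ t ω, 0 ≤ fc t ω := by
    intro t ω; simp only [hfcdef]; split <;> norm_num
  have hf00 : ∀ ω, 0 ≤ f0 ω := by
    intro ω; simp only [hf0def]; split <;> norm_num
  -- the singleton-coordinate computation
  have hP0 : ∑ ω : Fin η → Bool, w ω * f0 ω = q := by
    have key : ∀ ω : Fin η → Bool, w ω * f0 ω
        = ∏ j, ((if ω j then q else 1 - q) *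
            (if j = sStar then (if ω j then (1:ℝ) else 0) else 1)) := by
      intro ω
      rw [Finset.prod_mul_distrib]
      congr 1
      rw [Fintype.prod_ite_eq' sStar (fun j => if ω j then (1:ℝ) else 0)]
    rw [Finset.sum_congr rfl (fun ω _ => key ω),
      sum_prod_bool (fun j b => (if b then q else 1 - q) *
        (if j = sStar then (if b then (1:ℝ) else 0) else 1))]
    calc ∏ j : Fin η, _ = ∏ j : Fin η, (if j = sStar then q else 1) := by
          apply Finset.prod_congr rfl
          intro j _
          by_cases hj : j = sStar <;> simp [hj] <;> ring
      _ = q := by rw [Fintype.prod_ite_eq' sStar (fun _ => q)]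
  -- per-round computation
  have hPc : ∀ t ∈ T, ∑ ω : Fin η → Bool, w ω * fc t ω
      = 1 - (1 - q) ^ ((σ t).erase sStar).card := by
    intro t ht
    set A : Finset (Fin η) := (σ t).erase sStar with hA
    have hiff : ∀ ω : Fin η → Bool,
        (∃ j ∈ σ t, j ≠ sStar ∧ ω j = true) ↔ ¬ (∀ j ∈ A, ω j = false) := by
      intro ω
      constructor
      · rintro ⟨j, hjσ, hjne, hjt⟩ h
        exact absurd (h j (Finset.mem_erase.2 ⟨hjne, hjσ⟩)) (by simp [hjt])
      · intro h
        push_neg at h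
        obtain ⟨j, hjA, hj⟩ := h
        exact ⟨j, (Finset.mem_erase.1 hjA).2, (Finset.mem_erase.1 hjA).1,
          by simpa using hj⟩
    have hN : ∑ ω : Fin η → Bool,
        w ω * (if ∀ j ∈ A, ω j = false then (1:ℝ) else 0) = (1 - q) ^ A.card := by
      have key : ∀ ω : Fin η → Bool,
          w ω * (if ∀ j ∈ A, ω j = false then (1:ℝ) else 0)
          = ∏ j, ((if ω j then q else 1 - q) *
              (if j ∈ A then (if ω j then (0:ℝ) else 1) else 1)) := by
        intro ω
        rw [Finset.prod_mul_distrib]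
        congr 1
        by_cases h : ∀ j ∈ A, ω j = false
        · rw [if_pos h]
          symm
          apply Finset.prod_eq_one
          intro j _
          by_cases hj : j ∈ A
          · simp [hj, h j hj]
          · simp [hj]
        · rw [if_neg h]
          push_neg at h
          obtain ⟨j, hjA, hj⟩ := h
          symm
          apply Finset.prod_eq_zero (Finset.mem_univ j)
          have hjt : ω j = true := by simpa using hj
          simp [hjA, hjt]
      rw [Finset.sum_congr rfl (fun ω _ => key ω),
        sum_prod_bool (fun j b => (if b then q else 1 - q) *
          (if j ∈ A then (if b then (0:ℝ) else 1) else 1))]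
      calc ∏ j : Fin η, _ = ∏ j : Fin η, (if j ∈ A then 1 - q else 1) := by
            apply Finset.prod_congr rfl
            intro j _
            by_cases hj : j ∈ A <;> simp [hj] <;> ring
        _ = (1 - q) ^ A.card := by
            rw [Fintype.prod_ite_mem A (fun _ => 1 - q), Finset.prod_const]
    have step : ∀ ω : Fin η → Bool, w ω * fc t ω
        = w ω - w ω * (if ∀ j ∈ A, ω j = false then (1:ℝ) else 0) := by
      intro ω
      simp only [hfcdef]
      by_cases h : ∀ j ∈ A, ω j = false
      · rw [if_neg (fun hex => ((hiff ω).1 hex) h), if_pos h]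
        ring
      · rw [if_pos ((hiff ω).2 h), if_neg h]
        ring
    rw [Finset.sum_congr rfl (fun ω _ => step ω), Finset.sum_sub_distrib, htotal, hN]
  -- cardinality facts per round
  have hcard1 : ∀ t ∈ T, 1 ≤ ((σ t).erase sStar).card := by
    intro t ht
    have hts : sStar ∈ σ t := (Finset.mem_filter.1 ht).2
    have hex : ∃ j ∈ σ t, j ≠ sStar := by
      by_contra hcon
      push_neg at hcon
      exact hNotLost t (Finset.eq_singleton_iff_unique_mem.2 ⟨hts, hcon⟩)
    obtain ⟨j, hjσ, hjne⟩ := hex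
    exact Finset.card_pos.2 ⟨j, Finset.mem_erase.2 ⟨hjne, hjσ⟩⟩
  -- per-round lower bound via exp
  have hfactor : ∀ t ∈ T, Real.exp (-(1 / (q * ((σ t).erase sStar).card)))
      ≤ ∑ ω : Fin η → Bool, w ω * fc t ω := by
    intro t ht
    rw [hPc t ht]
    exact one_sub_pow_lower hq0 hq1 (hcard1 t ht)
  -- sum of inverse masses is at most log η
  have hsum_le : ∑ t ∈ T, 1 / (q * (((σ t).erase sStar).card : ℝ)) ≤ Real.log η := by
    have hterm : ∀ t ∈ T, 1 / (q * (((σ t).erase sStar).card : ℝ))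
        ≤ (2 / q) * ((1:ℝ) / (σ t).card) := by
      intro t ht
      have hts : sStar ∈ σ t := (Finset.mem_filter.1 ht).2
      have hcard : (((σ t).erase sStar).card : ℝ) + 1 = ((σ t).card : ℝ) := by
        exact_mod_cast Finset.card_erase_add_one hts
      have ha1 : (1:ℝ) ≤ (((σ t).erase sStar).card : ℝ) := by
        exact_mod_cast hcard1 t ht
      have hk : ((σ t).card : ℝ) ≤ 2 * (((σ t).erase sStar).card : ℝ) := by linarith
      have hkpos : (0:ℝ) < ((σ t).card : ℝ) := by linarith
      have hrw : (2 / q) * ((1:ℝ) / ((σ t).card : ℝ)) = 2 / (q * ((σ t).card : ℝ)) := by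
        field_simp
      rw [hrw, div_le_div_iff₀ (by positivity) (by positivity)]
      nlinarith
    calc ∑ t ∈ T, 1 / (q * (((σ t).erase sStar).card : ℝ))
        ≤ ∑ t ∈ T, (2 / q) * ((1:ℝ) / (σ t).card) := Finset.sum_le_sum hterm
      _ = (2 / q) * ∑ t ∈ T, (1:ℝ) / (σ t).card := by rw [Finset.mul_sum]
      _ ≤ (2 / q) * (Δ * Real.log η / (6 * η)) := by
          apply mul_le_mul_of_nonneg_left _ (by positivity)
          exact hPot
      _ = (2 / 3) * Real.log η := by
          rw [hqdef]
          field_simp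
          ring
      _ ≤ Real.log η := by
          have : 0 ≤ Real.log η := Real.log_nonneg hη1
          linarith
  -- product lower bound
  have hprod : 1 / (η : ℝ) ≤ ∏ t ∈ T, (∑ ω : Fin η → Bool, w ω * fc t ω) := by
    calc 1 / (η : ℝ) = Real.exp (-(Real.log η)) := by
          rw [Real.exp_neg, Real.exp_log hηpos, one_div]
      _ ≤ Real.exp (-(∑ t ∈ T, 1 / (q * (((σ t).erase sStar).card : ℝ)))) :=
          Real.exp_le_exp.2 (by linarith)
      _ = ∏ t ∈ T, Real.exp (-(1 / (q * (((σ t).erase sStar).card : ℝ)))) := by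
          rw [← Real.exp_sum]
          congr 1
          rw [← Finset.sum_neg_distrib]
      _ ≤ ∏ t ∈ T, (∑ ω : Fin η → Bool, w ω * fc t ω) :=
          Finset.prod_le_prod (fun t _ => (Real.exp_pos _).le) hfactor
  -- FKG steps
  have hfkg1 : ∏ t ∈ T, (∑ ω : Fin η → Bool, w ω * fc t ω)
      ≤ ∑ ω : Fin η → Bool, w ω * ∏ t ∈ T, fc t ω :=
    fkg_prod w hw0 hsup htotal T fc hfc0 hmonoc
  have hgm : Monotone fun ω : Fin η → Bool => ∏ t ∈ T, fc t ω := fun a b hab =>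
    Finset.prod_le_prod (fun t _ => hfc0 t a) fun t _ => hmonoc t hab
  have hg0 : ∀ ω : Fin η → Bool, 0 ≤ ∏ t ∈ T, fc t ω := fun ω =>
    Finset.prod_nonneg fun t _ => hfc0 t ω
  have hfkg2 : (∑ ω : Fin η → Bool, w ω * f0 ω) *
      (∑ ω : Fin η → Bool, w ω * ∏ t ∈ T, fc t ω)
      ≤ ∑ ω : Fin η → Bool, w ω * (f0 ω * ∏ t ∈ T, fc t ω) := by
    have := fkg f0 (fun ω : Fin η → Bool => ∏ t ∈ T, fc t ω) w hw0 hf00 hg0 hmono0 hgm hsup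
    rwa [htotal, one_mul] at this
  -- identify the filtered sum
  have hfinal : ∑ ω ∈ Finset.univ.filter (fun ω : Fin η → Bool => ω sStar = true ∧
        ∀ t : Fin L, sStar ∈ σ t → ∃ j ∈ σ t, j ≠ sStar ∧ ω j = true), w ω
      = ∑ ω : Fin η → Bool, w ω * (f0 ω * ∏ t ∈ T, fc t ω) := by
    rw [Finset.sum_filter]
    apply Finset.sum_congr rfl
    intro ω _
    by_cases hp : ω sStar = true ∧ ∀ t : Fin L, sStar ∈ σ t → ∃ j ∈ σ t, j ≠ sStar ∧ ω j = true
    · rw [if_pos hp]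
      have h0 : f0 ω = 1 := by simp only [hf0def]; rw [if_pos hp.1]
      have hc : ∏ t ∈ T, fc t ω = 1 := by
        apply Finset.prod_eq_one
        intro t ht
        simp only [hfcdef]
        exact if_pos (hp.2 t (Finset.mem_filter.1 ht).2)
      rw [h0, hc]
      ring
    · rw [if_neg hp]
      by_cases h0 : ω sStar = true
      · have hex : ∃ t, sStar ∈ σ t ∧ ¬ ∃ j ∈ σ t, j ≠ sStar ∧ ω j = true := by
          by_contra hcon
          push_neg at hcon
          exact hp ⟨h0, fun t ht => hcon t ht⟩
        obtain ⟨t, ht, hne⟩ := hex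
        have hz : fc t ω = 0 := by simp only [hfcdef]; rw [if_neg hne]
        rw [Finset.prod_eq_zero (Finset.mem_filter.2 ⟨Finset.mem_univ t, ht⟩) hz]
        ring
      · have : f0 ω = 0 := by simp only [hf0def]; rw [if_neg h0]
        rw [this]
        ring
  -- put everything together
  have hqge : 1 / (η : ℝ) ≤ q := by
    rw [hqdef, div_le_div_iff₀ hηpos (by linarith)]
    nlinarith
  rw [hfinal]
  calc 1 / (η : ℝ) ^ 2 = (1 / η) * (1 / η) := by ring
    _ ≤ q * ∏ t ∈ T, (∑ ω : Fin η → Bool, w ω * fc t ω) :=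
        mul_le_mul hqge hprod (by positivity) hq0.le
    _ = (∑ ω : Fin η → Bool, w ω * f0 ω) *
        ∏ t ∈ T, (∑ ω : Fin η → Bool, w ω * fc t ω) := by rw [hP0]
    _ ≤ (∑ ω : Fin η → Bool, w ω * f0 ω) *
        (∑ ω : Fin η → Bool, w ω * ∏ t ∈ T, fc t ω) :=
        mul_le_mul_of_nonneg_left hfkg1
          (Finset.sum_nonneg fun ω _ => mul_nonneg (hw0 ω) (hf00 ω))
    _ ≤ ∑ ω : Fin η → Bool, w ω * (f0 ω * ∏ t ∈ T, fc t ω) := hfkg2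
end
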